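/- With P_n(x) the descent polynomial over permutations of {1,1,...,n,n} and Q_n(x) the descent polynomial over permutations of {1,1,...,n,n,n+1} (and P_0 = Q_0 = 1), the following recurrence holds for all n ≥ 0: P_{n+1}(x) = (1 + nx) Q_n(x) + (1/2) x (1-x) Q_n'(x). -/

import Mathlib

open Polynomial

/-- Number of descents of a word. -/
def des (l : List ℤ) : ℕ := ((l.zip l.tail).filter (fun p => p.2 < p.1)).length

/-- Type-B descents: prepend 0. -/
def desB (l : List ℤ) : ℕ := des (0 :: l)

/-- The multiset {1,1,2,2,...,n,n} as a list. -/
def baseList (n : ℕ) : List ℤ := (List.range n).flatMap (fun i => [(i : ℤ) + 1, (i : ℤ) + 1])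

/-- All distinct arrangements (multiset permutations) of a list. -/
def arrangements (l : List ℤ) : List (List ℤ) := l.permutations.dedup

/-- Descent polynomial over arrangements of `l`. -/
noncomputable def desPoly (l : List ℤ) : Polynomial ℝ :=
  ((arrangements l).map (fun w => (X : Polynomial ℝ) ^ des w)).sum

noncomputable def Ppoly (n : ℕ) : Polynomial ℝ := desPoly (baseList n)

noncomputable def Qpoly (n : ℕ) : Polynomial ℝ := desPoly (baseList n ++ [(n : ℤ) + 1])

/-- All signings of a word. -/
def signings : List ℤ → List (List ℤ)
  | [] => [[]]
  | a :: t => (signings t).flatMap (fun w => [a :: w, (-a) :: w])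

/-- All signed permutations of the multiset given by `l`. -/
def signedWords (l : List ℤ) : List (List ℤ) := (arrangements l).flatMap signings

noncomputable def SpolyB (n : ℕ) : Polynomial ℝ :=
  ((signedWords (baseList n)).map (fun w => (X : Polynomial ℝ) ^ desB w)).sum

/-- Signed permutations of {1,1,...,n,n,n+1} in which n+1 carries a plus sign. -/
def Dwords (n : ℕ) : List (List ℤ) :=
  (signedWords (baseList n ++ [(n : ℤ) + 1])).filter (fun w => ((n : ℤ) + 1) ∈ w)

noncomputable def TpolyB (n : ℕ) : Polynomial ℝ :=
  ((Dwords n).map (fun w => (X : Polynomial ℝ) ^ desB w)).sum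


-- ========== auxiliary lemmas ==========

lemma des_nil' : des ([] : List ℤ) = 0 := rfl
lemma des_single' (a : ℤ) : des [a] = 0 := rfl
lemma des_cons_cons (a b : ℤ) (t : List ℤ) :
    des (a :: b :: t) = (if b < a then 1 else 0) + des (b :: t) := by
  simp only [des, List.tail_cons, List.zip_cons_cons, List.filter_cons]
  split <;> simp_all <;> omega

lemma insertIdx_eraseIdx_self {m : ℤ} : ∀ (u : List ℤ) (i : ℕ), u[i]? = some m →
    (u.eraseIdx i).insertIdx i m = u
  | [], i, h => by simp at h
  | a :: t, 0, h => by simp_all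
  | a :: t, i+1, h => by
      simp only [List.getElem?_cons_succ] at h
      simp [List.eraseIdx_cons_succ, List.insertIdx_succ_cons, insertIdx_eraseIdx_self t i h]

lemma filter_count (m : ℤ) : ∀ (u : List ℤ),
    ((Finset.range u.length).filter (fun i => u[i]? = some m)).card = u.count m
  | [] => by simp
  | a :: t => by
      rw [Finset.card_filter, List.length_cons, Finset.sum_range_succ']
      simp only [List.getElem?_cons_succ, List.getElem?_cons_zero]
      rw [← Finset.card_filter, filter_count m t, List.count_cons]
      simp only [Option.some.injEq]
      split <;> split <;> simp_all

lemma sum_perm_insert (l : List ℤ) (m : ℤ) (f : List ℤ → Polynomial ℝ) :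
    ∑ w ∈ l.permutations.dedup.toFinset, ∑ i ∈ Finset.range (w.length + 1), f (w.insertIdx i m)
    = ∑ u ∈ (m :: l).permutations.dedup.toFinset, (u.count m) • f u := by
  have memA : ∀ w : List ℤ, w ∈ l.permutations.dedup.toFinset ↔ w.Perm l := by
    intro w; simp [List.mem_dedup, List.mem_permutations]
  have memB : ∀ u : List ℤ, u ∈ (m :: l).permutations.dedup.toFinset ↔ u.Perm (m :: l) := by
    intro u; simp [List.mem_dedup, List.mem_permutations]
  rw [Finset.sum_sigma']
  have : ∀ u ∈ (m :: l).permutations.dedup.toFinset, (u.count m) • f u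
      = ∑ i ∈ (Finset.range u.length).filter (fun i => u[i]? = some m), f u := by
    intro u _
    rw [Finset.sum_const, filter_count]
  rw [Finset.sum_congr rfl this, Finset.sum_sigma']
  refine Finset.sum_bij' (fun p _ => ⟨p.1.insertIdx p.2 m, p.2⟩)
    (fun p _ => ⟨p.1.eraseIdx p.2, p.2⟩) ?_ ?_ ?_ ?_ ?_
  · rintro ⟨w, i⟩ hp
    simp only [Finset.mem_sigma, memA, Finset.mem_range] at hp
    obtain ⟨hw, hi⟩ := hp
    have hi' : i ≤ w.length := Nat.lt_succ_iff.mp hi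
    simp only [Finset.mem_sigma, memB, Finset.mem_filter, Finset.mem_range]
    refine ⟨((List.perm_insertIdx m w hi').trans (hw.cons m)), ?_, ?_⟩
    · rw [List.length_insertIdx_of_le_length hi']; omega
    · rw [List.getElem?_eq_getElem (by rw [List.length_insertIdx_of_le_length hi']; omega),
        List.getElem_insertIdx_self]
  · rintro ⟨u, i⟩ hp
    simp only [Finset.mem_sigma, memB, Finset.mem_filter, Finset.mem_range] at hp
    obtain ⟨hu, hi, hmm⟩ := hp
    have heq := insertIdx_eraseIdx_self u i hmm
    have hlen : (u.eraseIdx i).length + 1 = u.length := List.length_eraseIdx_add_one hi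
    simp only [Finset.mem_sigma, memA, Finset.mem_range]
    constructor
    · have hpp : (u.eraseIdx i).insertIdx i m |>.Perm (m :: u.eraseIdx i) :=
        List.perm_insertIdx m _ (by omega)
      rw [heq] at hpp
      exact ((hpp.symm.trans hu).cons_inv)
    · omega
  · rintro ⟨w, i⟩ hp
    simp only [Finset.mem_sigma, memA, Finset.mem_range] at hp
    simp [List.eraseIdx_insertIdx_self]
  · rintro ⟨u, i⟩ hp
    simp only [Finset.mem_sigma, memB, Finset.mem_filter, Finset.mem_range] at hp
    simp [insertIdx_eraseIdx_self u i hp.2.2]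
  · rintro ⟨w, i⟩ _; rfl

noncomputable def gsum (m : ℤ) (w : List ℤ) : Polynomial ℝ :=
  ∑ i ∈ Finset.range (w.length + 1), X ^ des (w.insertIdx i m)

lemma gsum_cons_cons (m a b : ℤ) (t : List ℤ) (ha : a ≤ m) :
    gsum m (a :: b :: t) =
      X ^ ((if a < m then 1 else 0) + ((if b < a then 1 else 0) + des (b :: t)))
      + X ^ ((if b < m then 1 else 0) + des (b :: t))
      + X ^ (if b < a then 1 else 0) *
          (gsum m (b :: t) - X ^ ((if b < m then 1 else 0) + des (b :: t))) := by
  have e1 : ∀ i ∈ Finset.range (t.length + 1),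
      (X : Polynomial ℝ) ^ des ((b :: t).insertIdx (i + 1) m)
        = X ^ des (b :: t.insertIdx i m) := by
    intro i _; rw [List.insertIdx_succ_cons]
  have e0 : des ((b :: t).insertIdx 0 m) = (if b < m then 1 else 0) + des (b :: t) := by
    rw [List.insertIdx_zero, des_cons_cons]
  have hgb : gsum m (b :: t) =
      (∑ i ∈ Finset.range (t.length + 1), X ^ des (b :: t.insertIdx i m))
        + X ^ ((if b < m then 1 else 0) + des (b :: t)) := by
    unfold gsum
    rw [List.length_cons, Finset.sum_range_succ', Finset.sum_congr rfl e1, e0]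
  unfold gsum
  rw [List.length_cons, List.length_cons, Finset.sum_range_succ']
  have h1 : ∀ i ∈ Finset.range (t.length + 1 + 1),
      X ^ des ((a :: b :: t).insertIdx (i + 1) m)
        = (X : Polynomial ℝ) ^ des (a :: (b :: t).insertIdx i m) := by
    intro i _; rw [List.insertIdx_succ_cons]
  rw [Finset.sum_congr rfl h1]
  rw [Finset.sum_range_succ']
  have h2 : ∀ i ∈ Finset.range (t.length + 1),
      (X : Polynomial ℝ) ^ des (a :: (b :: t).insertIdx (i + 1) m)
        = X ^ (if b < a then 1 else 0) * X ^ des (b :: t.insertIdx i m) := by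
    intro i _
    rw [List.insertIdx_succ_cons, des_cons_cons, pow_add]
  rw [Finset.sum_congr rfl h2, ← Finset.mul_sum]
  have h3 : des (a :: (b :: t).insertIdx 0 m) = (if b < m then 1 else 0) + des (b :: t) := by
    rw [List.insertIdx_zero, des_cons_cons, des_cons_cons]
    have hna : ¬ (m < a) := not_lt.mpr ha
    simp [hna]
  have h4 : des ((a :: b :: t).insertIdx 0 m)
      = (if a < m then 1 else 0) + ((if b < a then 1 else 0) + des (b :: t)) := by
    rw [List.insertIdx_zero, des_cons_cons, des_cons_cons]
  rw [h3, h4]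
  have h5 : (∑ i ∈ Finset.range (t.length + 1 + 1),
        (X : Polynomial ℝ) ^ des ((b :: t).insertIdx i m)) = gsum m (b :: t) := by
    unfold gsum; rw [List.length_cons]
  rw [h5, hgb]
  ring

lemma gsum_eq (m : ℤ) : ∀ (t : List ℤ), (∀ a ∈ t, a ≤ m) →
    gsum m t = ((des t : Polynomial ℝ) + 1 + (t.count m : Polynomial ℝ)) * X ^ des t
      + ((t.length : Polynomial ℝ) - (des t : Polynomial ℝ) - (t.count m : Polynomial ℝ))
          * X ^ (des t + 1) := by
  intro t
  induction t with
  | nil => intro _; simp [gsum, des]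
  | cons a t ih =>
    intro hmem
    have ha : a ≤ m := hmem a List.mem_cons_self
    match t with
    | [] =>
      have h1 : gsum m [a] = X ^ des [m, a] + X ^ des [a, m] := by
        simp [gsum, Finset.sum_range_succ, List.insertIdx]
      rcases lt_or_eq_of_le ha with h | h
      · rw [h1, des_cons_cons, des_cons_cons]
        simp only [if_pos h, if_neg (by omega : ¬ m < a), if_neg (by omega : ¬ a = m)]
        simp [des, List.count_cons, if_neg (by omega : ¬ a = m)]
        ring
      · subst h
        rw [h1, des_cons_cons]
        simp only [if_neg (lt_irrefl a)]
        simp [des, List.count_cons]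
    | b :: t' =>
      have hb : b ≤ m := hmem b (by simp)
      have ih' := ih (fun x hx => hmem x (List.mem_cons_of_mem a hx))
      rw [gsum_cons_cons m a b t' ha, ih']
      rw [des_cons_cons a b t']
      simp only [List.count_cons, List.length_cons, beq_iff_eq]
      set k := des (b :: t') with hk
      rcases lt_or_eq_of_le ha with ha' | ha' <;> rcases lt_or_eq_of_le hb with hb' | hb' <;>
        rcases lt_or_ge b a with hc | hc
      · simp only [if_pos ha', if_pos hb', if_pos hc, if_neg (by omega : ¬ a = m),
          if_neg (by omega : ¬ b = m)]
        push_cast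
        ring
      · simp only [if_pos ha', if_pos hb', if_neg (not_lt.mpr hc), if_neg (by omega : ¬ a = m),
          if_neg (by omega : ¬ b = m)]
        push_cast
        ring
      · exact absurd (hb' ▸ hc) (not_lt.mpr ha)
      · subst hb'
        simp only [if_pos ha', if_neg (lt_irrefl b), if_neg (not_lt.mpr hc),
          if_neg (by omega : ¬ a = b), if_pos rfl]
        push_cast
        ring
      · subst ha'
        simp only [if_neg (lt_irrefl a), if_pos hb', if_pos hc, if_pos rfl,
          if_neg (by omega : ¬ b = a)]
        push_cast
        ring
      · subst ha'
        simp only [if_neg (lt_irrefl a), if_pos hb', if_neg (not_lt.mpr hc), if_pos rfl,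
          if_neg (by omega : ¬ b = a)]
        push_cast
        ring
      · exact absurd (hb' ▸ hc) (not_lt.mpr ha)
      · subst ha'
        subst hb'
        simp only [if_neg (lt_irrefl b), if_pos rfl]
        push_cast
        ring

lemma baseList_succ (n : ℕ) : baseList (n + 1) = baseList n ++ [(n : ℤ) + 1, (n : ℤ) + 1] := by
  simp [baseList, List.range_succ]

lemma baseList_length (n : ℕ) : (baseList n).length = 2 * n := by
  induction n with
  | zero => rfl
  | succ n ih => rw [baseList_succ]; simp [ih]; ring

lemma baseList_mem {n : ℕ} {a : ℤ} (h : a ∈ baseList n) : 1 ≤ a ∧ a ≤ n := by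
  simp only [baseList, List.mem_flatMap, List.mem_range] at h
  obtain ⟨i, hi, hmem⟩ := h
  simp only [List.mem_cons, List.not_mem_nil, or_false] at hmem
  rcases hmem with rfl | rfl <;> (simp at hi; obtain ⟨j, hj, rfl⟩ := hi; omega)

lemma baseList_count (n : ℕ) {m : ℤ} (hm : (n : ℤ) < m) : (baseList n).count m = 0 := by
  rw [List.count_eq_zero]
  intro hmem
  have := baseList_mem hmem
  omega

lemma per_w (n k : ℕ) :
    ((k : Polynomial ℝ) + 1 + 1) * X ^ k
      + (((2 * n + 1 : ℕ) : Polynomial ℝ) - (k : Polynomial ℝ) - 1) * X ^ (k + 1)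
    = 2 * ((1 + (n : Polynomial ℝ) * X) * X ^ k
        + C (1/2 : ℝ) * X * (1 - X) * derivative (X ^ k : Polynomial ℝ)) := by
  have hC : (2 : Polynomial ℝ) * C (1/2 : ℝ) = 1 := by
    rw [← map_ofNat C 2, ← C_mul]
    norm_num
  cases k with
  | zero =>
    simp only [pow_zero, derivative_one, mul_zero, add_zero]
    push_cast
    ring
  | succ j =>
    rw [derivative_X_pow]
    simp only [Nat.add_sub_cancel, C_eq_natCast]
    push_cast
    linear_combination (-(X * (1 - X) * ((j : Polynomial ℝ) + 1) * X ^ j)) * hC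

lemma perms_toFinset_eq {l₁ l₂ : List ℤ} (h : l₁.Perm l₂) :
    l₁.permutations.dedup.toFinset = l₂.permutations.dedup.toFinset := by
  ext w
  simp only [List.mem_toFinset, List.mem_dedup, List.mem_permutations]
  exact ⟨fun h' => h'.trans h, fun h' => h'.trans h.symm⟩

lemma desPoly_eq_sum (l : List ℤ) :
    desPoly l = ∑ w ∈ l.permutations.dedup.toFinset, (X : Polynomial ℝ) ^ des w :=
  (List.sum_toFinset _ (List.nodup_dedup _)).symm

def PcountZ (n : ℕ) (k : ℤ) : ℕ :=
  ((arrangements (baseList n)).filter (fun w => (des w : ℤ) = k)).length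

def QcountN (n : ℕ) (k : ℕ) : ℕ :=
  ((arrangements (baseList n ++ [(n : ℤ) + 1])).filter (fun w => des w = k)).length

def ScountZ (n : ℕ) (k : ℤ) : ℕ :=
  ((signedWords (baseList n)).filter (fun w => (desB w : ℤ) = k)).length

def TcountZ (n : ℕ) (k : ℤ) : ℕ :=
  ((Dwords n).filter (fun w => (desB w : ℤ) = k)).length


/-- P_{n+1}(x) = (1 + nx) Qₙ(x) + ½ x (1-x) Qₙ'(x). -/
theorem stmt9 (n : ℕ) :
    Ppoly (n + 1) = (1 + (n : Polynomial ℝ) * X) * Qpoly n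
      + C (1 / 2 : ℝ) * X * (1 - X) * derivative (Qpoly n) := by
  set m : ℤ := (n : ℤ) + 1 with hm
  have hperm : (m :: (baseList n ++ [m])).Perm (baseList (n + 1)) := by
    rw [baseList_succ]
    have h1 : (m :: (baseList n ++ [m])) = [m] ++ (baseList n ++ [m]) := rfl
    rw [h1]
    refine List.perm_append_comm.trans ?_
    rw [List.append_assoc]
    exact List.Perm.refl _
  have memA : ∀ w : List ℤ, w ∈ (baseList n ++ [m]).permutations.dedup.toFinset ↔
      w.Perm (baseList n ++ [m]) := by
    intro w; simp [List.mem_dedup, List.mem_permutations]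
  have memB : ∀ u : List ℤ, u ∈ (m :: (baseList n ++ [m])).permutations.dedup.toFinset ↔
      u.Perm (m :: (baseList n ++ [m])) := by
    intro u; simp [List.mem_dedup, List.mem_permutations]
  apply mul_left_cancel₀ (by norm_num : (2 : Polynomial ℝ) ≠ 0)
  rw [Ppoly, Qpoly, desPoly_eq_sum, desPoly_eq_sum, ← perms_toFinset_eq hperm]
  -- LHS
  have hcount2 : ∀ u ∈ (m :: (baseList n ++ [m])).permutations.dedup.toFinset,
      (2 : Polynomial ℝ) * X ^ des u = (u.count m) • ((X : Polynomial ℝ) ^ des u) := by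
    intro u hu
    have hu' := (memB u).mp hu
    have hcnt : u.count m = 2 := by
      rw [hu'.count_eq]
      simp [List.count_cons, List.count_append, baseList_count n (by omega : (n : ℤ) < m)]
    rw [hcnt]
    simp [nsmul_eq_mul]
  rw [Finset.mul_sum, Finset.sum_congr rfl hcount2, ← sum_perm_insert]
  -- per-w evaluation of inner sums
  have hinner : ∀ w ∈ (baseList n ++ [m]).permutations.dedup.toFinset,
      (∑ i ∈ Finset.range (w.length + 1), (X : Polynomial ℝ) ^ des (w.insertIdx i m))
      = 2 * ((1 + (n : Polynomial ℝ) * X) * X ^ des w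
          + C (1/2 : ℝ) * X * (1 - X) * derivative ((X : Polynomial ℝ) ^ des w)) := by
    intro w hw
    have hw' := (memA w).mp hw
    have hle : ∀ a ∈ w, a ≤ m := by
      intro a haw
      have : a ∈ baseList n ++ [m] := hw'.mem_iff.mp haw
      rcases List.mem_append.mp this with h' | h'
      · have := baseList_mem h'; omega
      · simp at h'; omega
    have hcnt : w.count m = 1 := by
      rw [hw'.count_eq]
      simp [List.count_append, baseList_count n (by omega : (n : ℤ) < m)]
    have hlen : w.length = 2 * n + 1 := by
      rw [hw'.length_eq]
      simp [baseList_length]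
    have := gsum_eq m w hle
    rw [hcnt, hlen] at this
    have hg : gsum m w = ∑ i ∈ Finset.range (w.length + 1),
        (X : Polynomial ℝ) ^ des (w.insertIdx i m) := rfl
    rw [← hg, this]
    push_cast
    have := per_w n (des w)
    push_cast at this
    rw [← this]
  rw [Finset.sum_congr rfl hinner]
  rw [derivative_sum, Finset.mul_sum, Finset.mul_sum, ← Finset.sum_add_distrib, Finset.mul_sum]
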